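/- Let S be a nonempty finite set and let P be a row-stochastic matrix indexed by S × S (all entries nonnegative and each row sums to 1). Then the Cesàro averages of the matrix powers converge: the limit lim_{n→∞} (1/n) ∑_{k=1}^{n} P^k exists entrywise. -/

import Mathlib

open Filter Matrix

section Aux

variable {S : Type*} [Fintype S] [Nonempty S] [DecidableEq S]

/-- Powers of a row-stochastic matrix are row-stochastic. -/
lemma stoch_pow (P : Matrix S S ℝ) (hnn : ∀ i j, 0 ≤ P i j) (hrow : ∀ i, ∑ j, P i j = 1) :
    ∀ k : ℕ, (∀ i j, 0 ≤ (P ^ k) i j) ∧ (∀ i, ∑ j, (P ^ k) i j = 1) := by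
  intro k
  induction k with
  | zero =>
    constructor
    · intro i j
      simp [Matrix.one_apply]
      positivity
    · intro i
      simp [Matrix.one_apply]
  | succ k ih =>
    have hmul : P ^ (k + 1) = P ^ k * P := pow_succ P k
    constructor
    · intro i j
      rw [hmul, Matrix.mul_apply]
      exact Finset.sum_nonneg fun l _ => mul_nonneg (ih.1 i l) (hnn l j)
    · intro i
      rw [hmul]
      simp only [Matrix.mul_apply]
      rw [Finset.sum_comm]
      calc ∑ l, ∑ j, (P ^ k) i l * P l j
          = ∑ l, (P ^ k) i l * ∑ j, P l j := by
            simp [Finset.mul_sum]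
        _ = 1 := by simp [hrow, ih.2 i]

/-- Uniform bound for applications of powers of a stochastic matrix. -/
lemma stoch_bound (P : Matrix S S ℝ) (hnn : ∀ i j, 0 ≤ P i j) (hrow : ∀ i, ∑ j, P i j = 1)
    (k : ℕ) (v : S → ℝ) (i : S) : |((P ^ k) *ᵥ v) i| ≤ ∑ l, |v l| := by
  obtain ⟨h1, h2⟩ := stoch_pow P hnn hrow k
  have hle1 : ∀ l, (P ^ k) i l ≤ 1 := by
    intro l
    rw [← h2 i]
    exact Finset.single_le_sum (fun m _ => h1 i m) (Finset.mem_univ l)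
  calc |((P ^ k) *ᵥ v) i| = |∑ l, (P ^ k) i l * v l| := rfl
    _ ≤ ∑ l, |(P ^ k) i l * v l| := Finset.abs_sum_le_sum_abs _ _
    _ ≤ ∑ l, |v l| := by
        apply Finset.sum_le_sum
        intro l _
        rw [abs_mul, abs_of_nonneg (h1 i l)]
        nlinarith [abs_nonneg (v l), hle1 l, h1 i l]

end Aux

theorem stmt11 {S : Type*} [Fintype S] [Nonempty S] [DecidableEq S]
    (P : Matrix S S ℝ) (hnn : ∀ i j, 0 ≤ P i j) (hrow : ∀ i, ∑ j, P i j = 1) :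
    ∃ L : Matrix S S ℝ, ∀ i j,
      Tendsto (fun n : ℕ => (1 / (n : ℝ)) * ∑ k ∈ Finset.Icc 1 n, (P ^ k) i j)
        atTop (nhds (L i j)) := by
  set f : (S → ℝ) →ₗ[ℝ] (S → ℝ) := Matrix.mulVecLin P with hf
  have hpow : ∀ (k : ℕ) (v : S → ℝ), (f ^ k) v = (P ^ k) *ᵥ v := by
    intro k
    induction k with
    | zero => intro v; simp
    | succ k ih =>
      intro v
      rw [pow_succ, Module.End.mul_apply, ih, pow_succ, ← Matrix.mulVec_mulVec]
      rfl
  set g : (S → ℝ) →ₗ[ℝ] (S → ℝ) := LinearMap.id - f with hg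
  -- fixed points
  have hker : ∀ u ∈ LinearMap.ker g, f u = u := by
    intro u hu
    have : u - f u = 0 := hu
    linear_combination (norm := module) -this
  -- disjointness of kernel and range
  have hdisj : Disjoint (LinearMap.ker g) (LinearMap.range g) := by
    rw [disjoint_iff_inf_le]
    rintro u ⟨hu1, w, hw⟩
    have hfu : f u = u := hker u hu1
    have hfw : f w = w - u := by
      have : w - f w = u := hw
      linear_combination (norm := module) -this
    have hiter : ∀ k : ℕ, (f ^ k) w = w - (k : ℝ) • u := by
      intro k
      induction k with
      | zero => simp
      | succ k ih =>
        rw [pow_succ', Module.End.mul_apply, ih, map_sub, _root_.map_smul, hfu, hfw]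
        push_cast
        module
    by_contra hne
    have hune : u ≠ 0 := by
      simpa [Submodule.mem_bot] using hne
    obtain ⟨i, hi⟩ : ∃ i, u i ≠ 0 := by
      by_contra h
      push_neg at h
      exact hune (funext h)
    set C := ∑ l, |w l| with hC
    have hbd : ∀ k : ℕ, |w i - (k : ℝ) * u i| ≤ C := by
      intro k
      have := stoch_bound P hnn hrow k w i
      rw [← hpow, hiter k] at this
      simpa using this
    obtain ⟨k, hk⟩ := exists_nat_gt ((C + |w i|) / |u i|)
    have hui : 0 < |u i| := abs_pos.mpr hi
    have h1 : C + |w i| < (k : ℝ) * |u i| := by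
      rw [div_lt_iff₀ hui] at hk
      linarith
    have h2 : (k : ℝ) * |u i| - |w i| ≤ |w i - (k : ℝ) * u i| := by
      have := abs_sub_abs_le_abs_sub ((k : ℝ) * u i) (w i)
      rw [abs_mul, Nat.abs_cast] at this
      have habs : |(k : ℝ) * u i - w i| = |w i - (k : ℝ) * u i| := abs_sub_comm _ _
      linarith [this, habs.le, habs.ge]
    linarith [hbd k]
  -- kernel and range span everything
  have hsup : LinearMap.ker g ⊔ LinearMap.range g = ⊤ := by
    apply Submodule.eq_top_of_disjoint
    · rw [add_comm]
      exact (LinearMap.finrank_range_add_finrank_ker g).ge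
    · exact hdisj
  -- decompose each basis vector
  have H : ∀ j : S, ∃ (u z : S → ℝ), f u = u ∧ u + (z - f z) = Pi.single j 1 := by
    intro j
    have hmem : (Pi.single j 1 : S → ℝ) ∈ LinearMap.ker g ⊔ LinearMap.range g := by
      rw [hsup]; trivial
    obtain ⟨u, hu, w, hw, huw⟩ := Submodule.mem_sup.mp hmem
    obtain ⟨z, hz⟩ := hw
    refine ⟨u, z, hker u hu, ?_⟩
    have hz' : z - f z = w := hz
    rw [hz', huw]
  choose u z hu hz using H
  refine ⟨Matrix.of fun i j => u j i, ?_⟩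
  intro i j
  simp only [Matrix.of_apply]
  -- fixed point property iterated
  have hfix : ∀ (j : S) (k : ℕ), (f ^ k) (u j) = u j := by
    intro j k
    induction k with
    | zero => simp
    | succ k ih => rw [pow_succ', Module.End.mul_apply, ih, hu]
  -- each term of the sum
  have hterm : ∀ k : ℕ, (P ^ k) i j = u j i + ((f ^ k) (z j) i - (f ^ (k + 1)) (z j) i) := by
    intro k
    have h1 : (P ^ k) i j = ((P ^ k) *ᵥ (Pi.single j 1)) i := by
      simp
    rw [h1, ← hpow, ← hz j, map_add, map_sub]
    have h2 : (f ^ k) (f (z j)) = (f ^ (k + 1)) (z j) := by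
      rw [pow_succ, Module.End.mul_apply]
    rw [hfix j k, h2]
    simp
  -- sum over Icc 1 n
  have hsum : ∀ n : ℕ, ∑ k ∈ Finset.Icc 1 n, (P ^ k) i j
      = (n : ℝ) * u j i + ((f ^ 1) (z j) i - (f ^ (n + 1)) (z j) i) := by
    intro n
    have h1 : ∑ k ∈ Finset.Icc 1 n, (P ^ k) i j
        = ∑ m ∈ Finset.range n, (P ^ (1 + m)) i j := by
      rw [← Finset.Ico_add_one_right_eq_Icc, Finset.sum_Ico_eq_sum_range]
      simp
    rw [h1]
    have h2 : ∀ m : ℕ, (P ^ (1 + m)) i j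
        = u j i + ((f ^ (m + 1)) (z j) i - (f ^ (m + 1 + 1)) (z j) i) := by
      intro m
      rw [add_comm 1 m]
      exact hterm (m + 1)
    rw [Finset.sum_congr rfl fun m _ => h2 m, Finset.sum_add_distrib,
      Finset.sum_const, Finset.card_range,
      Finset.sum_range_sub' (fun m => (f ^ (m + 1)) (z j) i) n]
    simp [mul_comm]
  -- the error term tends to zero
  set C := ∑ l, |z j l| with hC
  have hGbd : ∀ k : ℕ, |(f ^ k) (z j) i| ≤ C := by
    intro k
    rw [hpow]
    exact stoch_bound P hnn hrow k (z j) i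
  have herr : Tendsto (fun n : ℕ =>
      (1 / (n : ℝ)) * ((f ^ 1) (z j) i - (f ^ (n + 1)) (z j) i)) atTop (nhds 0) := by
    refine squeeze_zero_norm (a := fun n : ℕ => (2 * C) / (n : ℝ)) ?_
      (tendsto_const_div_atTop_nhds_zero_nat (2 * C))
    intro n
    rcases Nat.eq_zero_or_pos n with h0 | h0
    · subst h0; simp
    · have hn : (0 : ℝ) < n := by exact_mod_cast h0
      rw [Real.norm_eq_abs, abs_mul]
      have h1 : |(f ^ 1) (z j) i - (f ^ (n + 1)) (z j) i| ≤ 2 * C := by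
        have := hGbd 1
        have := hGbd (n + 1)
        have h := abs_sub (((f ^ 1) (z j)) i) (((f ^ (n + 1)) (z j)) i)
        linarith [abs_sub_abs_le_abs_sub (((f ^ 1) (z j)) i) (((f ^ (n + 1)) (z j)) i),
          abs_sub_le (((f ^ 1) (z j)) i) 0 (((f ^ (n + 1)) (z j)) i), hGbd 1, hGbd (n + 1)]
      have h2 : |1 / (n : ℝ)| = 1 / n := abs_of_pos (by positivity)
      rw [h2]
      show 1 / (n:ℝ) * |(f ^ 1) (z j) i - (f ^ (n + 1)) (z j) i| ≤ 2 * C / (n:ℝ)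
      rw [div_eq_mul_inv (2 * C) (n : ℝ)]
      calc 1 / (n : ℝ) * |(f ^ 1) (z j) i - (f ^ (n + 1)) (z j) i|
          ≤ 1 / (n : ℝ) * (2 * C) := by
            apply mul_le_mul_of_nonneg_left h1 (by positivity)
        _ = 2 * C * (n : ℝ)⁻¹ := by ring
  -- conclude
  have hmain : Tendsto (fun n : ℕ =>
      u j i + (1 / (n : ℝ)) * ((f ^ 1) (z j) i - (f ^ (n + 1)) (z j) i)) atTop
      (nhds (u j i)) := by
    have := (tendsto_const_nhds (x := u j i) (f := atTop (α := ℕ))).add herr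
    simpa using this
  apply hmain.congr'
  filter_upwards [eventually_ge_atTop 1] with n hn
  have hn' : (n : ℝ) ≠ 0 := by
    have : 0 < n := hn
    exact_mod_cast this.ne'
  rw [hsum n, mul_add]
  field_simp
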